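/- If δ_k ≥ 0 satisfies δ_{k+1} ≤ (1 - 2/(k+1))δ_k + 2/(k+1)² for all k ≥ 1, then δ_N ≤ 2/(N+2) for all N ≥ 2. -/

import Mathlib

/-- The key Frank–Wolfe recursion: if `δ_k ≥ 0` and
`δ_{k+1} ≤ (1 - 2/(k+1))δ_k + 2/(k+1)²` for all `k ≥ 1`, then
`δ_N ≤ 2/(N+2)` for all `N ≥ 2`. -/
theorem frank_wolfe_recursion (δ : ℕ → ℝ)
    (hpos : ∀ k, 1 ≤ k → 0 ≤ δ k)
    (hrec : ∀ k : ℕ, 1 ≤ k →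
      δ (k + 1) ≤ (1 - 2 / ((k : ℝ) + 1)) * δ k + 2 / ((k : ℝ) + 1) ^ 2) :
    ∀ N : ℕ, 2 ≤ N → δ N ≤ 2 / ((N : ℝ) + 2) := by
  intro N hN
  induction N with
  | zero => omega
  | succ n ih =>
    rcases Nat.lt_or_ge n 2 with h2 | h2
    · interval_cases n
      · omega
      · have := hrec 1 le_rfl
        have h1 := hpos 1 le_rfl
        push_cast at this ⊢
        nlinarith
    · have ihn := ih h2
      have hr := hrec n (by omega)
      have hn1 : (1 : ℝ) ≤ n := by exact_mod_cast Nat.one_le_iff_ne_zero.mpr (by omega)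
      have hcoef : (0:ℝ) ≤ 1 - 2 / ((n:ℝ) + 1) := by
        rw [sub_nonneg, div_le_one (by linarith)]; linarith
      have hstep : (1 - 2 / ((n:ℝ) + 1)) * δ n ≤ (1 - 2 / ((n:ℝ) + 1)) * (2 / ((n:ℝ) + 2)) :=
        mul_le_mul_of_nonneg_left ihn hcoef
      have key : (1 - 2 / ((n:ℝ) + 1)) * (2 / ((n:ℝ) + 2)) + 2 / ((n:ℝ) + 1) ^ 2
          ≤ 2 / ((n:ℝ) + 3) := by
        have ha : (0:ℝ) < (n:ℝ)+1 := by linarith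
        have hb : (0:ℝ) < (n:ℝ)+2 := by linarith
        have hc : (0:ℝ) < (n:ℝ)+3 := by linarith
        rw [le_div_iff₀ hc]
        field_simp
        ring_nf
        nlinarith [sq_nonneg ((n:ℝ)+1)]
      push_cast
      calc δ (n + 1) ≤ (1 - 2 / ((n:ℝ) + 1)) * δ n + 2 / ((n:ℝ) + 1) ^ 2 := hr
        _ ≤ (1 - 2 / ((n:ℝ) + 1)) * (2 / ((n:ℝ) + 2)) + 2 / ((n:ℝ) + 1) ^ 2 := by linarith
        _ ≤ 2 / ((n:ℝ) + 3) := key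
        _ = 2 / ((n:ℝ) + 1 + 2) := by ring_nf
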